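/- Let X, Y be invertible matrices and ν ∈ [0,1]. Then (1−ν)|X|² + ν|Y|² ≥ X ⓢ_ν Y ≥ ((1−ν)|X|⁻² + ν|Y|⁻²)⁻¹ in the Loewner order. -/

import Mathlib

open Matrix ComplexOrder

private lemma young_aux {ν l : ℝ} (h0 : 0 ≤ ν) (h1 : ν ≤ 1) (hl : 0 < l) :
    l ^ ν ≤ (1 - ν) + ν * l := by
  have := Real.geom_mean_le_arith_mean2_weighted (sub_nonneg.2 h1) h0 zero_le_one hl.le
    (by ring)
  simpa using this

private lemma gpos_aux {ν l : ℝ} (h0 : 0 ≤ ν) (h1 : ν ≤ 1) (hl : 0 < l) :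
    0 < (1 - ν) + ν * l⁻¹ :=
  lt_of_lt_of_le (Real.rpow_pos_of_pos (inv_pos.2 hl) ν) (young_aux h0 h1 (inv_pos.2 hl))

private lemma harm_aux {ν l : ℝ} (h0 : 0 ≤ ν) (h1 : ν ≤ 1) (hl : 0 < l) :
    ((1 - ν) + ν * l⁻¹)⁻¹ ≤ l ^ ν := by
  have h2 : (l ^ ν)⁻¹ ≤ (1 - ν) + ν * l⁻¹ := by
    rw [← Real.inv_rpow hl.le]; exact young_aux h0 h1 (inv_pos.2 hl)
  have hp : 0 < l ^ ν := Real.rpow_pos_of_pos hl ν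
  calc ((1 - ν) + ν * l⁻¹)⁻¹ ≤ ((l ^ ν)⁻¹)⁻¹ := inv_anti₀ (inv_pos.2 hp) h2
  _ = l ^ ν := inv_inv _

/-- real diagonal matrix over ℂ -/
noncomputable def dgm {n : ℕ} (f : Fin n → ℝ) : Matrix (Fin n) (Fin n) ℂ :=
  Matrix.diagonal fun i => ((f i : ℝ) : ℂ)

private lemma dgm_mul {n : ℕ} (f g : Fin n → ℝ) :
    dgm f * dgm g = dgm (fun i => f i * g i) := by
  simp [dgm, diagonal_mul_diagonal, ← Complex.ofReal_mul]

private lemma dgm_psd {n : ℕ} {f : Fin n → ℝ} (hf : ∀ i, 0 ≤ f i) :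
    (dgm f).PosSemidef := by
  unfold dgm
  exact posSemidef_diagonal_iff.2 fun i => by
    simpa using Complex.zero_le_real.2 (hf i)

private lemma psd_aux {n : ℕ} (B : Matrix (Fin n) (Fin n) ℂ) {f : Fin n → ℝ}
    (hf : ∀ i, 0 ≤ f i) : (Bᴴ * dgm f * B).PosSemidef :=
  (dgm_psd hf).conjTranspose_mul_mul_same B

private lemma dgm_comb {n : ℕ} (a b : ℝ) (u v : Fin n → ℝ) :
    dgm (fun i => a * u i + b * v i) = ((a : ℝ) : ℂ) • dgm u + ((b : ℝ) : ℂ) • dgm v := by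
  ext i j
  rcases eq_or_ne i j with rfl | hij
  · simp [dgm, Matrix.diagonal_apply_eq]
  · simp [dgm, Matrix.diagonal_apply_ne _ hij]

private lemma dgm_sub {n : ℕ} (u v : Fin n → ℝ) :
    dgm (fun i => u i - v i) = dgm u - dgm v := by
  ext i j
  rcases eq_or_ne i j with rfl | hij
  · simp [dgm, Matrix.diagonal_apply_eq]
  · simp [dgm, Matrix.diagonal_apply_ne _ hij]

private lemma dgm_one {n : ℕ} : dgm (fun _ : Fin n => (1 : ℝ)) = 1 := by
  simp [dgm]


/-- Real power of a Hermitian matrix via the spectral theorem (functional calculus);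
junk value `0` for non-Hermitian matrices. -/
noncomputable def Matrix.hrpow {n : ℕ} (A : Matrix (Fin n) (Fin n) ℂ) (r : ℝ) :
    Matrix (Fin n) (Fin n) ℂ :=
  if h : A.IsHermitian then
    (h.eigenvectorUnitary : Matrix (Fin n) (Fin n) ℂ) *
      Matrix.diagonal (fun i => ((h.eigenvalues i ^ r : ℝ) : ℂ)) *
      (h.eigenvectorUnitary : Matrix (Fin n) (Fin n) ℂ)ᴴ
  else 0

/-- Weighted geometric mean `A #_ν B` of positive definite matrices:
`A^{1/2} (A^{-1/2} B A^{-1/2})^ν A^{1/2}`. -/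
noncomputable def Matrix.gmean {n : ℕ} (A B : Matrix (Fin n) (Fin n) ℂ) (ν : ℝ) :
    Matrix (Fin n) (Fin n) ℂ :=
  A.hrpow (1/2) * ((A.hrpow (-(1/2)) * B * A.hrpow (-(1/2))).hrpow ν) * A.hrpow (1/2)

/-- Quadratic weighted geometric mean `X ⓢ_ν Y = X* (|Y X⁻¹|²)^ν X`. -/
noncomputable def Matrix.qgmean {n : ℕ} (X Y : Matrix (Fin n) (Fin n) ℂ) (ν : ℝ) :
    Matrix (Fin n) (Fin n) ℂ :=
  Xᴴ * ((Y * X⁻¹)ᴴ * (Y * X⁻¹)).hrpow ν * X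


theorem stmt_16 {n : ℕ} (X Y : Matrix (Fin n) (Fin n) ℂ)
    (hX : IsUnit X) (hY : IsUnit Y) {ν : ℝ} (hν : ν ∈ Set.Icc (0:ℝ) 1) :
    (((1 - ν : ℝ) : ℂ) • (Xᴴ * X) + ((ν : ℝ) : ℂ) • (Yᴴ * Y)
        - X.qgmean Y ν).PosSemidef ∧
      (X.qgmean Y ν -
        (((1 - ν : ℝ) : ℂ) • (Xᴴ * X)⁻¹ + ((ν : ℝ) : ℂ) • (Yᴴ * Y)⁻¹)⁻¹).PosSemidef := by
  obtain ⟨hν0, hν1⟩ := hν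
  have _iX := hX.invertible
  have _iY := hY.invertible
  have hM : ((Y * X⁻¹)ᴴ * (Y * X⁻¹)).IsHermitian := isHermitian_conjTranspose_mul_self _
  set M := (Y * X⁻¹)ᴴ * (Y * X⁻¹) with hMdef
  set U : Matrix (Fin n) (Fin n) ℂ := (hM.eigenvectorUnitary : Matrix (Fin n) (Fin n) ℂ) with hUdef
  set lam : Fin n → ℝ := hM.eigenvalues with hlamdef
  have hspec : M = U * dgm lam * Uᴴ := by
    have := hM.spectral_theorem
    simpa [dgm, Function.comp_def, Matrix.star_eq_conjTranspose] using this
  have hU1 : U * Uᴴ = 1 := by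
    simpa [Matrix.star_eq_conjTranspose] using
      (Matrix.mem_unitaryGroup_iff).mp hM.eigenvectorUnitary.2
  have hU2 : Uᴴ * U = 1 := by
    simpa [Matrix.star_eq_conjTranspose] using
      (Matrix.mem_unitaryGroup_iff').mp hM.eigenvectorUnitary.2
  -- invertibility facts
  have hx1 : X⁻¹ * X = 1 := Matrix.inv_mul_of_invertible X
  have hx2 : X * X⁻¹ = 1 := Matrix.mul_inv_of_invertible X
  have hy1 : Y⁻¹ * Y = 1 := Matrix.inv_mul_of_invertible Y
  have hy2 : Y * Y⁻¹ = 1 := Matrix.mul_inv_of_invertible Y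
  have hxh1 : Xᴴ * X⁻¹ᴴ = 1 := by rw [← Matrix.conjTranspose_mul, hx1, conjTranspose_one]
  have hxh2 : X⁻¹ᴴ * Xᴴ = 1 := by rw [← Matrix.conjTranspose_mul, hx2, conjTranspose_one]
  have hyh1 : Yᴴ * Y⁻¹ᴴ = 1 := by rw [← Matrix.conjTranspose_mul, hy1, conjTranspose_one]
  have hyh2 : Y⁻¹ᴴ * Yᴴ = 1 := by rw [← Matrix.conjTranspose_mul, hy2, conjTranspose_one]
  -- eigenvalues positive
  have hAu : IsUnit (Y * X⁻¹) := hY.mul (Matrix.isUnit_nonsing_inv_iff.2 hX)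
  have hdet : M.det ≠ 0 := by
    have h1 : (Y * X⁻¹).det ≠ 0 := ((Matrix.isUnit_iff_isUnit_det _).1 hAu).ne_zero
    rw [hMdef, Matrix.det_mul, Matrix.det_conjTranspose]
    exact mul_ne_zero (star_ne_zero.2 h1) h1
  have hlam : ∀ i, 0 < lam i := by
    intro i
    refine lt_of_le_of_ne ?_ (Ne.symm ?_)
    · exact (posSemidef_conjTranspose_mul_self (Y * X⁻¹)).eigenvalues_nonneg i
    · intro h
      apply hdet
      rw [hM.det_eq_prod_eigenvalues]
      exact Finset.prod_eq_zero (Finset.mem_univ i) (by rw [← hlamdef, h]; simp)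
  -- the key conjugation matrices
  set W : Matrix (Fin n) (Fin n) ℂ := Uᴴ * X with hWdef
  set V : Matrix (Fin n) (Fin n) ℂ := Uᴴ * X⁻¹ᴴ with hVdef
  have hWH : Wᴴ = Xᴴ * U := by
    rw [hWdef, Matrix.conjTranspose_mul, conjTranspose_conjTranspose]
  have hVH : Vᴴ = X⁻¹ * U := by
    simp [hVdef, Matrix.conjTranspose_mul]
  have hVW : V * Wᴴ = 1 := by
    rw [hVdef, hWH]
    simp only [Matrix.mul_assoc]
    rw [← Matrix.mul_assoc X⁻¹ᴴ Xᴴ U, hxh2, Matrix.one_mul, hU2]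
  have hVHW : Vᴴ * W = 1 := by
    rw [hVH, hWdef]
    simp only [Matrix.mul_assoc]
    rw [← Matrix.mul_assoc U Uᴴ X, hU1, Matrix.one_mul, hx1]
  -- base identities
  have hWW : Wᴴ * W = Xᴴ * X := by
    rw [hWH, hWdef, Matrix.mul_assoc, ← Matrix.mul_assoc U, hU1, Matrix.one_mul]
  have hWMW : Wᴴ * dgm lam * W = Yᴴ * Y := by
    rw [hWH, hWdef]
    have h2 : Xᴴ * U * dgm lam * (Uᴴ * X) = Xᴴ * (U * dgm lam * Uᴴ) * X := by
      simp only [Matrix.mul_assoc]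
    rw [h2, ← hspec, hMdef]
    simp only [Matrix.conjTranspose_mul, Matrix.mul_assoc]
    rw [hx1, Matrix.mul_one, ← Matrix.mul_assoc Xᴴ X⁻¹ᴴ, hxh1, Matrix.one_mul]
  have hQG : X.qgmean Y ν = Wᴴ * dgm (fun i => lam i ^ ν) * W := by
    rw [Matrix.qgmean, Matrix.hrpow, dif_pos hM, hWH, hWdef]
    simp only [dgm, Matrix.mul_assoc, hUdef, hlamdef]
  have hVV : Vᴴ * V = (Xᴴ * X)⁻¹ := by
    rw [Matrix.mul_inv_rev, ← Matrix.conjTranspose_nonsing_inv, hVH, hVdef,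
      Matrix.mul_assoc, ← Matrix.mul_assoc U, hU1, Matrix.one_mul]
  have hMinv : U * dgm (fun i => (lam i)⁻¹) * Uᴴ = M⁻¹ := by
    symm
    apply Matrix.inv_eq_right_inv
    rw [hspec]
    simp only [Matrix.mul_assoc]
    rw [← Matrix.mul_assoc Uᴴ U, hU2, Matrix.one_mul,
      ← Matrix.mul_assoc (dgm lam) (dgm (fun i => (lam i)⁻¹)), dgm_mul]
    have h3 : (fun i => lam i * (lam i)⁻¹) = fun _ : Fin n => (1:ℝ) := by
      funext i; exact mul_inv_cancel₀ (hlam i).ne'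
    rw [h3, dgm_one, Matrix.one_mul, hU1]
  have hMinv2 : M⁻¹ = X * (Y⁻¹ * Y⁻¹ᴴ) * Xᴴ := by
    apply Matrix.inv_eq_right_inv
    rw [hMdef]
    simp only [Matrix.conjTranspose_mul, Matrix.mul_assoc]
    rw [← Matrix.mul_assoc X⁻¹ X, hx1, Matrix.one_mul, ← Matrix.mul_assoc Y Y⁻¹, hy2,
      Matrix.one_mul, ← Matrix.mul_assoc Yᴴ Y⁻¹ᴴ, hyh1, Matrix.one_mul, hxh2]
  have hVMV : Vᴴ * dgm (fun i => (lam i)⁻¹) * V = (Yᴴ * Y)⁻¹ := by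
    rw [hVH, hVdef]
    have h2 : X⁻¹ * U * dgm (fun i => (lam i)⁻¹) * (Uᴴ * X⁻¹ᴴ)
        = X⁻¹ * (U * dgm (fun i => (lam i)⁻¹) * Uᴴ) * X⁻¹ᴴ := by
      simp only [Matrix.mul_assoc]
    rw [h2, hMinv, hMinv2, Matrix.mul_inv_rev, ← Matrix.conjTranspose_nonsing_inv]
    simp only [Matrix.mul_assoc]
    rw [hxh1, Matrix.mul_one, ← Matrix.mul_assoc X⁻¹ X, hx1, Matrix.one_mul]
  -- Part 1
  have e1 : ((1 - ν : ℝ) : ℂ) • (Xᴴ * X) + ((ν : ℝ) : ℂ) • (Yᴴ * Y) - X.qgmean Y ν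
      = Wᴴ * dgm (fun i => ((1 - ν) * 1 + ν * lam i) - lam i ^ ν) * W := by
    rw [dgm_sub, dgm_comb, ← hWW, ← hWMW, hQG]
    rw [dgm_one]
    simp only [Matrix.mul_sub, Matrix.sub_mul, Matrix.mul_add, Matrix.add_mul,
      mul_smul_comm, smul_mul_assoc, Matrix.mul_one]
  have e2key : ∀ i, (0:ℝ) ≤ ((1 - ν) * 1 + ν * lam i) - lam i ^ ν := by
    intro i
    have := young_aux hν0 hν1 (hlam i)
    simp only [mul_one]
    linarith
  constructor
  · rw [e1]; exact psd_aux W e2key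
  -- Part 2
  · set g : Fin n → ℝ := fun i => (1 - ν) * 1 + ν * (lam i)⁻¹ with hgdef
    have hg : ∀ i, 0 < g i := fun i => by
      simpa [hgdef] using gpos_aux hν0 hν1 (hlam i)
    have hS : ((1 - ν : ℝ) : ℂ) • (Xᴴ * X)⁻¹ + ((ν : ℝ) : ℂ) • (Yᴴ * Y)⁻¹
        = Vᴴ * dgm g * V := by
      rw [hgdef, dgm_comb, ← hVV, ← hVMV]
      rw [dgm_one]
      simp only [Matrix.mul_add, Matrix.add_mul, mul_smul_comm, smul_mul_assoc,
        Matrix.mul_one]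
    have hSinv : (((1 - ν : ℝ) : ℂ) • (Xᴴ * X)⁻¹ + ((ν : ℝ) : ℂ) • (Yᴴ * Y)⁻¹)⁻¹
        = Wᴴ * dgm (fun i => (g i)⁻¹) * W := by
      rw [hS]
      apply Matrix.inv_eq_right_inv
      simp only [Matrix.mul_assoc]
      rw [← Matrix.mul_assoc V Wᴴ, hVW, Matrix.one_mul,
        ← Matrix.mul_assoc (dgm g) (dgm fun i => (g i)⁻¹), dgm_mul]
      have h4 : (fun i => g i * (g i)⁻¹) = fun _ : Fin n => (1:ℝ) := by
        funext i; exact mul_inv_cancel₀ (hg i).ne'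
      rw [h4, dgm_one, Matrix.one_mul, hVHW]
    have e2 : X.qgmean Y ν -
        (((1 - ν : ℝ) : ℂ) • (Xᴴ * X)⁻¹ + ((ν : ℝ) : ℂ) • (Yᴴ * Y)⁻¹)⁻¹
        = Wᴴ * dgm (fun i => lam i ^ ν - (g i)⁻¹) * W := by
      rw [hSinv, hQG, dgm_sub]
      simp only [Matrix.mul_sub, Matrix.sub_mul]
    rw [e2]
    refine psd_aux W fun i => ?_
    have := harm_aux hν0 hν1 (hlam i)
    simp only [hgdef, mul_one]
    linarith
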